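/- Let n ≥ 3 and let K ⊆ ℝⁿ be a convex polytope with nonempty interior having exactly m vertices, where m ≥ n+1. Set t = 2^{n/(m−1)}. Then Γ_{2^n}(K) ≤ (m−1)/(m−1 + k(m−1, t)) ≤ (m−1)/(m−1 + ⌊a(t)·(m−1)⌋). -/

import Mathlib

open Real Set Pointwise

/-- The covering functional `Γ_m(K)`: the infimum of all `γ > 0` such that `K` can be
covered by `m` translates of `γ • K`. -/
noncomputable def coveringFunctional {n : ℕ} (m : ℕ) (K : Set (Fin n → ℝ)) : ℝ :=
  sInf {γ : ℝ | 0 < γ ∧ ∃ C : Set (Fin n → ℝ), C.Finite ∧ C.ncard = m ∧ K ⊆ C + γ • K}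

/-- `f x = (1+x)^(1+x) / x^x` (real powers). -/
noncomputable def f (x : ℝ) : ℝ := (1 + x) ^ (1 + x) / x ^ x


lemma exists_pointwise_le_sum {ι : Type*} (s : Finset ι) (b : ι → ℕ) :
    ∀ k : ℕ, k ≤ ∑ i ∈ s, b i → ∃ j : ι → ℕ, (∀ i, j i ≤ b i) ∧ ∑ i ∈ s, j i = k := by
  intro k
  induction k with
  | zero => intro _; exact ⟨0, fun i => Nat.zero_le _, by simp⟩
  | succ k ih =>
    intro hk
    obtain ⟨j, hj, hsum⟩ := ih (Nat.le_of_succ_le hk)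
    classical
    have hex : ∃ i ∈ s, j i < b i := by
      by_contra h
      push_neg at h
      have : ∑ i ∈ s, b i ≤ ∑ i ∈ s, j i := Finset.sum_le_sum h
      omega
    obtain ⟨i, his, hib⟩ := hex
    refine ⟨Function.update j i (j i + 1), ?_, ?_⟩
    · intro i'
      rcases eq_or_ne i' i with rfl | hne
      · simpa using hib
      · simpa [Function.update_of_ne hne] using hj i'
    · rw [Finset.sum_update_of_mem his]
      have h2 := Finset.add_sum_erase s j his
      rw [Finset.erase_eq] at h2
      omega

lemma card_antidiagonalTuple_le (m k : ℕ) :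
    (Finset.Nat.antidiagonalTuple m k).card ≤ (m + k - 1).choose k := by
  classical
  have hle : (Finset.Nat.antidiagonalTuple m k).card ≤
      ((Finset.univ : Finset (Sym (Fin m) k)).image Sym.toMultiset).card := by
    refine Finset.card_le_card_of_injOn (fun j => ∑ i, Multiset.replicate (j i) i) ?_ ?_
    · intro j hj
      rw [Finset.mem_coe, Finset.Nat.mem_antidiagonalTuple] at hj
      refine Finset.mem_coe.2 (Finset.mem_image.2 ⟨⟨∑ i, Multiset.replicate (j i) i, ?_⟩, Finset.mem_univ _, rfl⟩)
      have cardsum : ∀ (u : Finset (Fin m)) (g : Fin m → Multiset (Fin m)),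
          Multiset.card (∑ i ∈ u, g i) = ∑ i ∈ u, Multiset.card (g i) := by
        intro u g
        induction u using Finset.cons_induction with
        | empty => simp
        | cons a u ha ih => simp [Finset.sum_cons, ih]
      rw [cardsum]
      simpa [Multiset.card_replicate] using hj
    · intro j₁ _ j₂ _ h
      funext i
      have h' := congrArg (Multiset.count i) h
      simpa [Multiset.count_sum', Multiset.count_replicate, Finset.sum_ite_eq] using h'
  have himg : ((Finset.univ : Finset (Sym (Fin m) k)).image Sym.toMultiset).card
      = Fintype.card (Sym (Fin m) k) := by
    rw [Finset.card_image_of_injective _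
      (show Function.Injective (Sym.toMultiset : Sym (Fin m) k → Multiset (Fin m)) from
        fun a b hab => Subtype.ext hab), Finset.card_univ]
  calc (Finset.Nat.antidiagonalTuple m k).card
      ≤ Fintype.card (Sym (Fin m) k) := by rw [← himg]; exact hle
    _ = Nat.multichoose m k := by
        rw [Sym.card_sym_eq_multichoose, Fintype.card_fin]
    _ = (m + k - 1).choose k := Nat.multichoose_eq m k

lemma choose_le_fa_pow {a : ℝ} (ha : 0 < a) (N j : ℕ) (hj : (j : ℝ) ≤ a * N) :
    (((N + j).choose N : ℕ) : ℝ) ≤ ((1 + a) ^ (1 + a) / a ^ a) ^ N := by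
  have ha1 : (0:ℝ) < 1 + a := by linarith
  have hstep1 : (((N + j).choose N : ℕ) : ℝ) * a ^ j ≤ (1 + a) ^ (N + j) := by
    have hpow := add_pow a 1 (N + j)
    have hmem : j ∈ Finset.range (N + j + 1) := Finset.mem_range.2 (by omega)
    have hsingle : a ^ j * 1 ^ (N + j - j) * ((N + j).choose j : ℝ)
        ≤ ∑ i ∈ Finset.range (N + j + 1), a ^ i * 1 ^ (N + j - i) * ((N + j).choose i : ℝ) := by
      refine Finset.single_le_sum (f := fun i => a ^ i * 1 ^ (N + j - i) * ((N + j).choose i : ℝ)) (fun i _ => ?_) hmem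
      positivity
    rw [← hpow] at hsingle
    have hsymm : (N + j).choose j = (N + j).choose N := by
      rw [add_comm N j]; exact Nat.choose_symm_add
    rw [hsymm] at hsingle
    calc (((N + j).choose N : ℕ) : ℝ) * a ^ j
        = a ^ j * 1 ^ (N + j - j) * ((N + j).choose N : ℝ) := by ring
      _ ≤ (a + 1) ^ (N + j) := hsingle
      _ = (1 + a) ^ (N + j) := by ring
  have haj : (0:ℝ) < a ^ j := pow_pos ha j
  have hstep1' : (((N + j).choose N : ℕ) : ℝ) ≤ (1 + a) ^ (N + j) / a ^ j :=
    (le_div_iff₀ haj).2 hstep1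
  have hc : (0:ℝ) ≤ a * N - j := by linarith
  -- rewrite nat pows as rpow
  have hA : ((1:ℝ) + a) ^ (N + j) = (1 + a) ^ (((N:ℝ) + j)) := by
    rw [← Real.rpow_natCast (1 + a) (N + j)]; push_cast; ring_nf
  have haJ : a ^ j = a ^ ((j:ℝ)) := by rw [← Real.rpow_natCast a j]
  have hstep2 : (1 + a) ^ (((N:ℝ) + j)) / a ^ ((j:ℝ))
      ≤ (1 + a) ^ ((1 + a) * (N:ℝ)) / a ^ (a * (N:ℝ)) := by
    have e1 : (1 + a) ^ ((1 + a) * (N:ℝ))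
        = (1 + a) ^ (((N:ℝ) + j)) * (1 + a) ^ (a * N - j) := by
      rw [← Real.rpow_add ha1]; ring_nf
    have e2 : a ^ (a * (N:ℝ)) = a ^ ((j:ℝ)) * a ^ (a * N - j) := by
      rw [← Real.rpow_add ha]; ring_nf
    rw [e1, e2]
    rw [div_le_div_iff₀ (Real.rpow_pos_of_pos ha _) (by positivity)]
    have hbase : a ^ (a * N - j) ≤ (1 + a) ^ (a * N - j) :=
      Real.rpow_le_rpow ha.le (by linarith) hc
    have h1 : (0:ℝ) < (1 + a) ^ (((N:ℝ) + j)) := Real.rpow_pos_of_pos ha1 _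
    have h2 : (0:ℝ) < a ^ ((j:ℝ)) := Real.rpow_pos_of_pos ha _
    calc (1 + a) ^ (((N:ℝ) + j)) * (a ^ ((j:ℝ)) * a ^ (a * N - j))
        = ((1 + a) ^ (((N:ℝ) + j)) * a ^ ((j:ℝ))) * a ^ (a * N - j) := by ring
      _ ≤ ((1 + a) ^ (((N:ℝ) + j)) * a ^ ((j:ℝ))) * (1 + a) ^ (a * N - j) := by
          exact mul_le_mul_of_nonneg_left hbase (by positivity)
      _ = (1 + a) ^ (((N:ℝ) + j)) * (1 + a) ^ (a * N - j) * a ^ ((j:ℝ)) := by ring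
  have hfinal : ((1 + a) ^ (1 + a) / a ^ a) ^ N
      = (1 + a) ^ ((1 + a) * (N:ℝ)) / a ^ (a * (N:ℝ)) := by
    rw [div_pow, ← Real.rpow_natCast ((1 + a) ^ (1 + a)) N, ← Real.rpow_natCast (a ^ a) N,
      ← Real.rpow_mul ha1.le, ← Real.rpow_mul ha.le]
  rw [hfinal]
  calc (((N + j).choose N : ℕ) : ℝ) ≤ (1 + a) ^ (N + j) / a ^ j := hstep1'
    _ = (1 + a) ^ (((N:ℝ) + j)) / a ^ ((j:ℝ)) := by rw [hA, haJ]
    _ ≤ _ := hstep2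

lemma cover_core {d : ℕ} (N k : ℕ) (hN : 0 < N) (v : Fin (N + 1) → (Fin d → ℝ))
    (hv : Function.Injective v) :
    convexHull ℝ (Set.range v) ⊆
      (fun j : Fin (N + 1) → ℕ => ∑ i, ((j i : ℝ) / ((N : ℝ) + k)) • v i) ''
          {j : Fin (N + 1) → ℕ | ∑ i, j i = k} +
        ((N : ℝ) / ((N : ℝ) + k)) • convexHull ℝ (Set.range v) := by
  classical
  have hNR : (0:ℝ) < N := by exact_mod_cast hN
  set s : ℝ := (N : ℝ) + k with hs_def
  have hs : (0:ℝ) < s := by positivity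
  set γ : ℝ := (N : ℝ) / s with hγ_def
  have hγ : (0:ℝ) < γ := by positivity
  intro x hx
  have hrange : Set.range v = ↑(Finset.univ.image v) := by
    rw [Finset.coe_image, Finset.coe_univ, Set.image_univ]
  rw [hrange, Finset.convexHull_eq] at hx
  obtain ⟨w, hw0, hw1, hx⟩ := hx
  have hv' : ∀ x_1 ∈ Finset.univ, ∀ y ∈ Finset.univ, v x_1 = v y → x_1 = y :=
    fun a _ b _ hab => hv hab
  set lam : Fin (N + 1) → ℝ := fun i => w (v i) with hlam_def
  have hlam0 : ∀ i, 0 ≤ lam i := fun i => hw0 (v i) (Finset.mem_image_of_mem v (Finset.mem_univ i))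
  have hlam1 : ∑ i, lam i = 1 := by
    rw [← Finset.sum_image hv']; exact hw1
  have hxeq : x = ∑ i, lam i • v i := by
    rw [← hx, Finset.centerMass_eq_of_sum_1 _ _ hw1]
    simp only [id_eq]
    exact Finset.sum_image hv'
  -- floors
  set b : Fin (N + 1) → ℕ := fun i => ⌊lam i * s⌋₊ with hb_def
  have hbk : k ≤ ∑ i, b i := by
    have h1 : ∑ i, lam i * s = s := by rw [← Finset.sum_mul, hlam1, one_mul]
    have h2 : ∑ i, lam i * s < ∑ i, ((b i : ℝ) + 1) :=
      Finset.sum_lt_sum_of_nonempty Finset.univ_nonempty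
        (fun i _ => Nat.lt_floor_add_one _)
    have h3 : ∑ i, ((b i : ℝ) + 1) = ((∑ i, b i : ℕ) : ℝ) + (N + 1) := by
      rw [Finset.sum_add_distrib]
      push_cast
      simp [Finset.card_univ]
    rw [h1, h3] at h2
    have h4 : (k : ℝ) < ((∑ i, b i : ℕ) : ℝ) + 1 := by
      rw [hs_def] at h2; linarith
    exact_mod_cast Nat.lt_add_one_iff.1 (by exact_mod_cast h4)
  obtain ⟨j, hjb, hjk⟩ := exists_pointwise_le_sum Finset.univ b k hbk
  have hjlam : ∀ i, (j i : ℝ) ≤ lam i * s := fun i =>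
    le_trans (by exact_mod_cast hjb i) (Nat.floor_le (mul_nonneg (hlam0 i) hs.le))
  set c : Fin d → ℝ := ∑ i, ((j i : ℝ) / s) • v i with hc_def
  set mu : Fin (N + 1) → ℝ := fun i => (lam i - (j i : ℝ) / s) / γ with hmu_def
  have hmu0 : ∀ i, 0 ≤ mu i := by
    intro i
    have : (j i : ℝ) / s ≤ lam i := (div_le_iff₀ hs).2 (by linarith [hjlam i])
    have h2 : 0 ≤ lam i - (j i : ℝ) / s := by linarith
    exact div_nonneg h2 hγ.le
  have hsumj : ∑ i, ((j i : ℝ)) = (k : ℝ) := by exact_mod_cast congrArg (Nat.cast : ℕ → ℝ) hjk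
  have hmu1 : ∑ i, mu i = 1 := by
    have : ∑ i, mu i = ((∑ i, lam i) - (∑ i, (j i : ℝ)) / s) / γ := by
      rw [hmu_def, ← Finset.sum_div, Finset.sum_sub_distrib, ← Finset.sum_div]
    rw [this, hlam1, hsumj, hγ_def, hs_def]
    field_simp
    ring
  set y : Fin d → ℝ := ∑ i, mu i • v i with hy_def
  have hy : y ∈ convexHull ℝ (Set.range v) :=
    mem_convexHull_of_exists_fintype mu v hmu0 hmu1 (fun i => Set.mem_range_self i) rfl
  have hcmem : c ∈ (fun j : Fin (N + 1) → ℕ => ∑ i, ((j i : ℝ) / s) • v i) ''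
      {j : Fin (N + 1) → ℕ | ∑ i, j i = k} := ⟨j, hjk, rfl⟩
  have hxcy : x = c + γ • y := by
    rw [hxeq, hc_def, hy_def, Finset.smul_sum, ← Finset.sum_add_distrib]
    refine Finset.sum_congr rfl (fun i _ => ?_)
    rw [smul_smul, ← add_smul]
    congr 1
    rw [hmu_def]
    field_simp
    ring
  rw [hxcy]
  exact Set.add_mem_add hcmem (smul_mem_smul_set hy)

/-- Let `n ≥ 3` and `K ⊆ ℝⁿ` be a convex polytope with nonempty interior having exactly
`m` vertices, `m ≥ n + 1`. Let `t = 2^(n/(m-1))`, `a = a(t)` the positive solution of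
`f a = t`, and `k = k(m-1,t)` the nonnegative integer with
`C(m-1+k, m-1) ≤ t^(m-1) < C(m-1+k+1, m-1)`. Then
`Γ_{2^n}(K) ≤ (m−1)/(m−1+k) ≤ (m−1)/(m−1+⌊a·(m−1)⌋)`. -/
theorem coveringFunctional_polytope_le (n m : ℕ) (hn : 3 ≤ n) (hm : n + 1 ≤ m)
    (K : Set (Fin n → ℝ))
    (hpoly : ∃ V : Finset (Fin n → ℝ), K = convexHull ℝ (V : Set (Fin n → ℝ)))
    (hint : (interior K).Nonempty)
    (hvert : (Set.extremePoints ℝ K).ncard = m)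
    (t : ℝ) (ht : t = (2 : ℝ) ^ ((n : ℝ) / ((m : ℝ) - 1)))
    (a : ℝ) (ha : 0 < a) (hfa : f a = t)
    (k : ℕ) (hk1 : (((m - 1) + k).choose (m - 1) : ℝ) ≤ t ^ (m - 1))
    (hk2 : t ^ (m - 1) < (((m - 1) + k + 1).choose (m - 1) : ℝ)) :
    coveringFunctional (2 ^ n) K ≤ ((m : ℝ) - 1) / (((m : ℝ) - 1) + k) ∧
      ((m : ℝ) - 1) / (((m : ℝ) - 1) + k) ≤
        ((m : ℝ) - 1) / (((m : ℝ) - 1) + (⌊a * ((m : ℝ) - 1)⌋₊ : ℝ)) := by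
  classical
  set N : ℕ := m - 1 with hN_def
  have hmN : m = N + 1 := by omega
  have hN3 : 3 ≤ N := by omega
  have hNpos : 0 < N := by omega
  have hNR : ((N : ℕ) : ℝ) = (m : ℝ) - 1 := by
    rw [hN_def]; push_cast [Nat.cast_sub (by omega : 1 ≤ m)]; ring
  have hmr1 : (3:ℝ) ≤ (m : ℝ) - 1 := by rw [← hNR]; exact_mod_cast hN3
  -- t ^ N = 2 ^ n
  have htpow : t ^ N = ((2 ^ n : ℕ) : ℝ) := by
    rw [ht, ← Real.rpow_natCast ((2:ℝ) ^ ((n : ℝ) / ((m : ℝ) - 1))) N,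
      ← Real.rpow_mul (by norm_num), hNR,
      div_mul_cancel₀ _ (by linarith : (m : ℝ) - 1 ≠ 0)]
    push_cast
    rw [Real.rpow_natCast]
  -- second inequality
  have hfloor_le : ⌊a * ((m : ℝ) - 1)⌋₊ ≤ k := by
    by_contra hcon
    push_neg at hcon
    set j : ℕ := ⌊a * ((m : ℝ) - 1)⌋₊ with hj_def
    have hjle : (j : ℝ) ≤ a * N := by
      rw [hNR]
      exact Nat.floor_le (by positivity)
    have hb := choose_le_fa_pow ha N j hjle
    have hfaN : ((1 + a) ^ (1 + a) / a ^ a) ^ N = t ^ N := by rw [← hfa]; rfl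
    rw [hfaN] at hb
    have hmono : (N + k + 1).choose N ≤ (N + j).choose N :=
      Nat.choose_le_choose N (by omega)
    have hmono' : ((N + k + 1).choose N : ℝ) ≤ ((N + j).choose N : ℝ) := by exact_mod_cast hmono
    linarith [hk2]
  have hineq2 : ((m : ℝ) - 1) / (((m : ℝ) - 1) + k) ≤
      ((m : ℝ) - 1) / (((m : ℝ) - 1) + (⌊a * ((m : ℝ) - 1)⌋₊ : ℝ)) := by
    have hjk : ((⌊a * ((m : ℝ) - 1)⌋₊ : ℕ) : ℝ) ≤ (k : ℝ) := by exact_mod_cast hfloor_le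
    gcongr
    all_goals first | positivity | linarith
  refine ⟨?_, hineq2⟩
  -- first inequality
  obtain ⟨V, hV⟩ := hpoly
  have hE_sub : Set.extremePoints ℝ K ⊆ ↑V := by
    rw [hV]; exact extremePoints_convexHull_subset
  have hEfin : (Set.extremePoints ℝ K).Finite := V.finite_toSet.subset hE_sub
  have hKcomp : IsCompact K := by rw [hV]; exact V.finite_toSet.isCompact_convexHull (𝕜 := ℝ)
  have hKconv : Convex ℝ K := by rw [hV]; exact convex_convexHull ℝ _
  have hKE : convexHull ℝ (Set.extremePoints ℝ K) = K := by
    have h1 := closure_convexHull_extremePoints hKcomp hKconv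
    rwa [IsClosed.closure_eq (hEfin.isCompact_convexHull (𝕜 := ℝ)).isClosed] at h1
  set F : Finset (Fin n → ℝ) := hEfin.toFinset with hF_def
  have hFcoe : ↑F = Set.extremePoints ℝ K := hEfin.coe_toFinset
  have hFcard : F.card = N + 1 := by
    rw [hF_def, ← Set.ncard_eq_toFinset_card _ hEfin, hvert, hmN]
  set e := F.equivFin with he_def
  set v : Fin (N + 1) → (Fin n → ℝ) :=
    fun i => ↑(e.symm (Fin.cast hFcard.symm i)) with hv_def
  have hvinj : Function.Injective v := by
    intro i1 i2 h
    have h1 : e.symm (Fin.cast hFcard.symm i1) = e.symm (Fin.cast hFcard.symm i2) :=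
      Subtype.coe_injective h
    have h2 := e.symm.injective h1
    have h3 := congrArg Fin.val h2
    simp only [Fin.coe_cast] at h3
    exact Fin.ext h3
  have hrange : Set.range v = ↑F := by
    ext x
    constructor
    · rintro ⟨i, rfl⟩
      exact (e.symm (Fin.cast hFcard.symm i)).2
    · intro hx
      refine ⟨Fin.cast hFcard (e ⟨x, hx⟩), ?_⟩
      have hcc : Fin.cast hFcard.symm (Fin.cast hFcard (e ⟨x, hx⟩)) = e ⟨x, hx⟩ := rfl
      rw [hv_def]
      simp only [hcc, Equiv.symm_apply_apply]
  have hKv : K = convexHull ℝ (Set.range v) := by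
    rw [hrange, hFcoe, hKE]
  have hcover := cover_core N k hNpos v hvinj
  rw [← hKv] at hcover
  set C₀ : Finset (Fin n → ℝ) :=
    (Finset.Nat.antidiagonalTuple (N + 1) k).image
      (fun j : Fin (N + 1) → ℕ => ∑ i, ((j i : ℝ) / ((N : ℝ) + k)) • v i) with hC₀_def
  have hC₀coe : (↑C₀ : Set (Fin n → ℝ)) =
      (fun j : Fin (N + 1) → ℕ => ∑ i, ((j i : ℝ) / ((N : ℝ) + k)) • v i) ''
        {j : Fin (N + 1) → ℕ | ∑ i, j i = k} := by
    rw [hC₀_def, Finset.coe_image]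
    congr 1
    ext j
    simp [Finset.Nat.mem_antidiagonalTuple]
  have hC₀card : C₀.card ≤ 2 ^ n := by
    have h1 : C₀.card ≤ (Finset.Nat.antidiagonalTuple (N + 1) k).card :=
      Finset.card_image_le
    have h2 := card_antidiagonalTuple_le (N + 1) k
    have h3 : (N + 1 + k - 1) = N + k := by omega
    have h4 : (N + k).choose k = (N + k).choose N := (Nat.choose_symm_add).symm
    have h5 : (N + k).choose N ≤ 2 ^ n := by
      have h6 := hk1
      rw [htpow] at h6
      exact_mod_cast h6
    rw [h3] at h2
    omega
  have hinf : Infinite (Fin n → ℝ) := by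
    have : NeZero n := ⟨by omega⟩
    infer_instance
  obtain ⟨C, hC₀C, hCcard⟩ := Infinite.exists_superset_card_eq C₀ (2 ^ n) hC₀card
  have hγpos : (0:ℝ) < (N : ℝ) / ((N : ℝ) + k) := by positivity
  have hmem : (N : ℝ) / ((N : ℝ) + k) ∈
      {γ : ℝ | 0 < γ ∧ ∃ C : Set (Fin n → ℝ), C.Finite ∧ C.ncard = 2 ^ n ∧ K ⊆ C + γ • K} := by
    refine ⟨hγpos, ↑C, C.finite_toSet, by rw [Set.ncard_coe_finset, hCcard], ?_⟩
    refine hcover.trans ?_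
    rw [← hC₀coe]
    exact Set.add_subset_add_right (by exact_mod_cast Finset.coe_subset.2 hC₀C)
  have hle : coveringFunctional (2 ^ n) K ≤ (N : ℝ) / ((N : ℝ) + k) := by
    apply csInf_le ⟨0, fun x hx => hx.1.le⟩ hmem
  rw [← hNR]
  exact hle
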